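/- Let A be an n×n matrix with entries in {0,1} such that the number of pairs (i,j) with a_{ij}=1 is at least (99/100)n². Then for every k ≥ 2, the trace of A^k satisfies tr(A^k) ≥ (n/2)^k. -/
import Mathlib


/-- If an `n × n` 0-1 matrix has at least `(99/100) n²` entries equal to `1`,
then for every `k ≥ 2` the trace of `A^k` satisfies `tr(A^k) ≥ (n/2)^k`. -/
theorem stmt1 (n : ℕ) (A : Matrix (Fin n) (Fin n) ℝ)
    (h01 : ∀ i j, A i j = 0 ∨ A i j = 1)
    (hcard : (99 / 100 : ℝ) * (n : ℝ) ^ 2 ≤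
      ((Finset.univ.filter fun p : Fin n × Fin n => A p.1 p.2 = 1).card : ℝ)) :
    ∀ k : ℕ, 2 ≤ k → ((n : ℝ) / 2) ^ k ≤ Matrix.trace (A ^ k) := by
  classical
  intro k hk
  obtain ⟨m, rfl⟩ : ∃ m, k = m + 2 := ⟨k - 2, by omega⟩
  rcases Nat.eq_zero_or_pos n with hn | hn
  · subst hn
    have h0 : Matrix.trace (A ^ (m + 2)) = 0 := by
      simp [Matrix.trace]
    rw [h0]
    norm_num
  set N : ℝ := (n : ℝ) with hN
  have hNpos : 0 < N := by rw [hN]; exact_mod_cast hn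
  have hA0 : ∀ i j, 0 ≤ A i j := by
    intro i j; rcases h01 i j with h | h <;> rw [h] <;> norm_num
  have hA1 : ∀ i j, A i j ≤ 1 := by
    intro i j; rcases h01 i j with h | h <;> rw [h] <;> norm_num
  -- entries of powers are nonnegative
  have hpow : ∀ (q : ℕ) (i j : Fin n), 0 ≤ (A ^ q) i j := by
    intro q
    induction q with
    | zero =>
      intro i j
      rw [pow_zero, Matrix.one_apply]
      split <;> norm_num
    | succ q ih =>
      intro i j
      rw [pow_succ, Matrix.mul_apply]
      exact Finset.sum_nonneg fun x _ => mul_nonneg (ih i x) (hA0 x j)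
  -- sum of all entries equals the number of ones
  have hsum : ((Finset.univ.filter fun p : Fin n × Fin n => A p.1 p.2 = 1).card : ℝ)
      = ∑ p : Fin n × Fin n, A p.1 p.2 := by
    rw [← Finset.sum_filter_add_sum_filter_not Finset.univ
      (fun p : Fin n × Fin n => A p.1 p.2 = 1) (fun p => A p.1 p.2)]
    have h1 : ∑ p ∈ Finset.univ.filter (fun p : Fin n × Fin n => A p.1 p.2 = 1),
        A p.1 p.2 = ((Finset.univ.filter fun p : Fin n × Fin n => A p.1 p.2 = 1).card : ℝ) := by
      rw [Finset.sum_congr rfl (fun p hp => (Finset.mem_filter.mp hp).2)]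
      simp
    have h2 : ∑ p ∈ Finset.univ.filter (fun p : Fin n × Fin n => ¬ A p.1 p.2 = 1),
        A p.1 p.2 = 0 := by
      apply Finset.sum_eq_zero
      intro p hp
      rcases h01 p.1 p.2 with h | h
      · exact h
      · exact absurd h (Finset.mem_filter.mp hp).2
    rw [h1, h2, add_zero]
  -- row and column zero-counts
  set z : Fin n → ℝ := fun i => ∑ j, (1 - A i j) with hz
  set w : Fin n → ℝ := fun i => ∑ j, (1 - A j i) with hw
  have hz0 : ∀ i, 0 ≤ z i := fun i =>
    Finset.sum_nonneg fun j _ => by have := hA1 i j; linarith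
  have hw0 : ∀ i, 0 ≤ w i := fun i =>
    Finset.sum_nonneg fun j _ => by have := hA1 j i; linarith
  have htotz : ∑ i, z i ≤ N ^ 2 / 100 := by
    have h1 : ∑ i, z i = N ^ 2 - ∑ p : Fin n × Fin n, A p.1 p.2 := by
      rw [Fintype.sum_prod_type]
      simp only [hz, Finset.sum_sub_distrib, Finset.sum_const, Finset.card_univ,
        Fintype.card_fin, nsmul_eq_mul, mul_one]
      ring
    rw [hsum] at hcard
    rw [h1]; linarith
  have htotw : ∑ i, w i ≤ N ^ 2 / 100 := by
    have h1 : ∑ i, w i = N ^ 2 - ∑ p : Fin n × Fin n, A p.1 p.2 := by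
      rw [Fintype.sum_prod_type]
      rw [Finset.sum_comm]
      simp only [hw, Finset.sum_sub_distrib, Finset.sum_const, Finset.card_univ,
        Fintype.card_fin, nsmul_eq_mul, mul_one]
      ring
    rw [hsum] at hcard
    rw [h1]; linarith
  -- the good set S
  set S : Finset (Fin n) := Finset.univ.filter (fun i => z i ≤ N / 10 ∧ w i ≤ N / 10)
    with hS
  -- bound on the number of bad rows/columns
  have hbad : ∀ f : Fin n → ℝ, (∀ i, 0 ≤ f i) → (∑ i, f i ≤ N ^ 2 / 100) →
      ((Finset.univ.filter fun i => N / 10 < f i).card : ℝ) ≤ N / 10 := by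
    intro f hf0 hftot
    set B := Finset.univ.filter fun i => N / 10 < f i with hB
    have h1 : (B.card : ℝ) * (N / 10) ≤ ∑ i ∈ B, f i := by
      have := Finset.sum_le_sum (fun i hi => le_of_lt (Finset.mem_filter.mp hi).2 :
        ∀ i ∈ B, N / 10 ≤ f i)
      simpa [Finset.sum_const, nsmul_eq_mul, mul_comm] using this
    have h2 : ∑ i ∈ B, f i ≤ ∑ i, f i :=
      Finset.sum_le_sum_of_subset_of_nonneg (Finset.subset_univ B) fun i _ _ => hf0 i
    have h3 : (B.card : ℝ) * (N / 10) ≤ N ^ 2 / 100 := by linarith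
    nlinarith [hNpos]
  have hScard : 4 * N / 5 ≤ (S.card : ℝ) := by
    have hzc := hbad z hz0 htotz
    have hwc := hbad w hw0 htotw
    have hsub : Sᶜ ⊆ (Finset.univ.filter fun i => N / 10 < z i) ∪
        (Finset.univ.filter fun i => N / 10 < w i) := by
      intro i hi
      rw [Finset.mem_compl, hS, Finset.mem_filter] at hi
      push_neg at hi
      simp only [Finset.mem_union, Finset.mem_filter, Finset.mem_univ, true_and]
      by_cases h : z i ≤ N / 10
      · right; exact hi (Finset.mem_univ i) h
      · left; exact lt_of_not_ge h
    have hcomp : ((Sᶜ : Finset (Fin n)).card : ℝ) ≤ N / 5 := by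
      have := Finset.card_le_card hsub
      have h2 := Finset.card_union_le (Finset.univ.filter fun i => N / 10 < z i)
        (Finset.univ.filter fun i => N / 10 < w i)
      have : ((Sᶜ : Finset (Fin n)).card : ℝ) ≤
          ((Finset.univ.filter fun i => N / 10 < z i).card : ℝ) +
          ((Finset.univ.filter fun i => N / 10 < w i).card : ℝ) := by
        exact_mod_cast le_trans this h2
      linarith
    have hcc : (S.card : ℝ) + ((Sᶜ : Finset (Fin n)).card : ℝ) = N := by
      have := Finset.card_add_card_compl S
      rw [Fintype.card_fin] at this
      rw [hN]
      exact_mod_cast this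
    linarith
  -- restricted row sums
  have hrow : ∀ (i : Fin n) (U : Finset (Fin n)), (U.card : ℝ) - z i ≤ ∑ j ∈ U, A i j := by
    intro i U
    have h1 : ∑ j ∈ U, (1 - A i j) ≤ z i :=
      Finset.sum_le_sum_of_subset_of_nonneg (Finset.subset_univ U)
        (fun j _ _ => by have := hA1 i j; linarith)
    have h2 : ∑ j ∈ U, (1 - A i j) = (U.card : ℝ) - ∑ j ∈ U, A i j := by
      rw [Finset.sum_sub_distrib, Finset.sum_const, nsmul_eq_mul, mul_one]
    linarith
  have hcol : ∀ (i : Fin n) (U : Finset (Fin n)), (U.card : ℝ) - w i ≤ ∑ j ∈ U, A j i := by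
    intro i U
    have h1 : ∑ j ∈ U, (1 - A j i) ≤ w i :=
      Finset.sum_le_sum_of_subset_of_nonneg (Finset.subset_univ U)
        (fun j _ _ => by have := hA1 j i; linarith)
    have h2 : ∑ j ∈ U, (1 - A j i) = (U.card : ℝ) - ∑ j ∈ U, A j i := by
      rw [Finset.sum_sub_distrib, Finset.sum_const, nsmul_eq_mul, mul_one]
    linarith
  -- key growth lemma
  have hgrow : ∀ i ∈ S, ∀ q : ℕ, (7 * N / 10) ^ q ≤ ∑ x ∈ S, (A ^ q) i x := by
    intro i hi q
    induction q with
    | zero =>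
      rw [pow_zero]
      have : ∑ x ∈ S, (A ^ 0) i x = 1 := by
        rw [pow_zero]
        simp only [Matrix.one_apply]
        rw [Finset.sum_ite_eq S i (fun _ => (1 : ℝ))]
        simp [hi]
      rw [this]
    | succ q ih =>
      have hstep : ∑ x ∈ S, (A ^ (q + 1)) i x
          = ∑ y, (A ^ q) i y * ∑ x ∈ S, A y x := by
        simp only [pow_succ, Matrix.mul_apply]
        rw [Finset.sum_comm]
        exact Finset.sum_congr rfl fun y _ => by rw [Finset.mul_sum]
      rw [hstep]
      have hdrop : ∑ y ∈ S, (A ^ q) i y * ∑ x ∈ S, A y x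
          ≤ ∑ y, (A ^ q) i y * ∑ x ∈ S, A y x := by
        apply Finset.sum_le_sum_of_subset_of_nonneg (Finset.subset_univ S)
        intro y _ _
        exact mul_nonneg (hpow q i y) (Finset.sum_nonneg fun x _ => hA0 y x)
      have hlow : ∀ y ∈ S, 7 * N / 10 ≤ ∑ x ∈ S, A y x := by
        intro y hy
        have hzy : z y ≤ N / 10 := ((Finset.mem_filter.mp hy).2).1
        have := hrow y S
        linarith
      have hmain : (7 * N / 10) ^ q * (7 * N / 10) ≤ ∑ y ∈ S, (A ^ q) i y * ∑ x ∈ S, A y x := by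
        calc (7 * N / 10) ^ q * (7 * N / 10)
            ≤ (∑ y ∈ S, (A ^ q) i y) * (7 * N / 10) := by
              apply mul_le_mul_of_nonneg_right ih; positivity
          _ = ∑ y ∈ S, (A ^ q) i y * (7 * N / 10) := by rw [Finset.sum_mul]
          _ ≤ ∑ y ∈ S, (A ^ q) i y * ∑ x ∈ S, A y x :=
              Finset.sum_le_sum fun y hy =>
                mul_le_mul_of_nonneg_left (hlow y hy) (hpow q i y)
      calc (7 * N / 10) ^ (q + 1) = (7 * N / 10) ^ q * (7 * N / 10) := by ring
        _ ≤ ∑ y ∈ S, (A ^ q) i y * ∑ x ∈ S, A y x := hmain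
        _ ≤ ∑ y, (A ^ q) i y * ∑ x ∈ S, A y x := hdrop
  -- diagonal bound for i ∈ S
  have hdiag : ∀ i ∈ S, (N / 2) ^ (m + 1) ≤ (A ^ (m + 2)) i i := by
    intro i hi
    set T : Finset (Fin n) := S.filter (fun x => A x i = 1) with hT
    have hTcard : 7 * N / 10 ≤ (T.card : ℝ) := by
      have h1 : ∑ x ∈ S, A x i = (T.card : ℝ) := by
        rw [← Finset.sum_filter_add_sum_filter_not S (fun x => A x i = 1) (fun x => A x i)]
        have ha : ∑ x ∈ S.filter (fun x => A x i = 1), A x i = (T.card : ℝ) := by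
          rw [Finset.sum_congr rfl (fun x hx => (Finset.mem_filter.mp hx).2)]
          simp [hT]
        have hb : ∑ x ∈ S.filter (fun x => ¬ A x i = 1), A x i = 0 := by
          apply Finset.sum_eq_zero
          intro x hx
          rcases h01 x i with h | h
          · exact h
          · exact absurd h (Finset.mem_filter.mp hx).2
        rw [ha, hb, add_zero]
      have hwi : w i ≤ N / 10 := ((Finset.mem_filter.mp hi).2).2
      have := hcol i S
      linarith
    -- ∑_{x∈T} (A^{m+1}) i x ≥ (N/2)^{m+1}
    have hmid : (N / 2) ^ (m + 1) ≤ ∑ x ∈ T, (A ^ (m + 1)) i x := by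
      have hstep : ∑ x ∈ T, (A ^ (m + 1)) i x
          = ∑ y, (A ^ m) i y * ∑ x ∈ T, A y x := by
        simp only [pow_succ, Matrix.mul_apply]
        rw [Finset.sum_comm]
        exact Finset.sum_congr rfl fun y _ => by rw [Finset.mul_sum]
      rw [hstep]
      have hlow : ∀ y ∈ S, N / 2 ≤ ∑ x ∈ T, A y x := by
        intro y hy
        have hzy : z y ≤ N / 10 := ((Finset.mem_filter.mp hy).2).1
        have := hrow y T
        linarith
      have h1 : (7 * N / 10) ^ m * (N / 2) ≤ ∑ y ∈ S, (A ^ m) i y * ∑ x ∈ T, A y x := by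
        calc (7 * N / 10) ^ m * (N / 2)
            ≤ (∑ y ∈ S, (A ^ m) i y) * (N / 2) := by
              apply mul_le_mul_of_nonneg_right (hgrow i hi m); positivity
          _ = ∑ y ∈ S, (A ^ m) i y * (N / 2) := by rw [Finset.sum_mul]
          _ ≤ ∑ y ∈ S, (A ^ m) i y * ∑ x ∈ T, A y x :=
              Finset.sum_le_sum fun y hy =>
                mul_le_mul_of_nonneg_left (hlow y hy) (hpow m i y)
      have h2 : ∑ y ∈ S, (A ^ m) i y * ∑ x ∈ T, A y x
          ≤ ∑ y, (A ^ m) i y * ∑ x ∈ T, A y x := by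
        apply Finset.sum_le_sum_of_subset_of_nonneg (Finset.subset_univ S)
        intro y _ _
        exact mul_nonneg (hpow m i y) (Finset.sum_nonneg fun x _ => hA0 y x)
      have h3 : (N / 2) ^ (m + 1) ≤ (7 * N / 10) ^ m * (N / 2) := by
        have hp : (N / 2) ^ m ≤ (7 * N / 10) ^ m := by
          apply pow_le_pow_left₀ (by positivity)
          linarith
        calc (N / 2) ^ (m + 1) = (N / 2) ^ m * (N / 2) := by ring
          _ ≤ (7 * N / 10) ^ m * (N / 2) := by
              apply mul_le_mul_of_nonneg_right hp; positivity
      linarith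
    -- (A^{m+2}) i i ≥ ∑_{x∈T} (A^{m+1}) i x
    have hfin : ∑ x ∈ T, (A ^ (m + 1)) i x ≤ (A ^ (m + 2)) i i := by
      have h1 : (A ^ (m + 2)) i i = ∑ x, (A ^ (m + 1)) i x * A x i := by
        rw [pow_succ, Matrix.mul_apply]
      rw [h1]
      have h2 : ∑ x ∈ T, (A ^ (m + 1)) i x = ∑ x ∈ T, (A ^ (m + 1)) i x * A x i := by
        apply Finset.sum_congr rfl
        intro x hx
        rw [(Finset.mem_filter.mp hx).2, mul_one]
      rw [h2]
      apply Finset.sum_le_sum_of_subset_of_nonneg (Finset.subset_univ T)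
      intro x _ _
      exact mul_nonneg (hpow (m + 1) i x) (hA0 x i)
    linarith
  -- conclude
  have htr : Matrix.trace (A ^ (m + 2)) = ∑ i, (A ^ (m + 2)) i i := rfl
  rw [htr]
  have h1 : ∑ i ∈ S, (A ^ (m + 2)) i i ≤ ∑ i, (A ^ (m + 2)) i i :=
    Finset.sum_le_sum_of_subset_of_nonneg (Finset.subset_univ S)
      fun i _ _ => hpow (m + 2) i i
  have h2 : (S.card : ℝ) * (N / 2) ^ (m + 1) ≤ ∑ i ∈ S, (A ^ (m + 2)) i i := by
    have := Finset.sum_le_sum (fun i hi => hdiag i hi :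
      ∀ i ∈ S, (N / 2) ^ (m + 1) ≤ (A ^ (m + 2)) i i)
    simpa [Finset.sum_const, nsmul_eq_mul, mul_comm] using this
  have h3 : (N / 2) ^ (m + 2) ≤ (S.card : ℝ) * (N / 2) ^ (m + 1) := by
    have hp : (0 : ℝ) ≤ (N / 2) ^ (m + 1) := by positivity
    calc (N / 2) ^ (m + 2) = (N / 2) * (N / 2) ^ (m + 1) := by ring
      _ ≤ (S.card : ℝ) * (N / 2) ^ (m + 1) := by
          apply mul_le_mul_of_nonneg_right _ hp
          linarith
  linarith
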